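/- If the formal power series v in the expansion α(x) = −2/x + (1/3)log(±x) + v(x) of the regular Abel function of h(x) = e^x − 1 had positive radius of convergence, then j(x) = 1/α'(x) would be a convergent power series; combined with Écalle's criterion this would make all regular iterates h^{[t]} convergent, contradicting Baker's theorem that h^{[t]} converges only for integer t. Hence v has radius of convergence 0. -/

import Mathlib

open PowerSeries

/-- A formal power series over `ℝ` has positive radius of convergence. -/
def HasPosRadius (f : PowerSeries ℝ) : Prop :=
  ∃ r : ℝ, 0 < r ∧ Summable fun n : ℕ => |coeff n f| * r ^ n

/-- Composition `g ∘ f` of formal power series (intended for `f` with zero constant term). -/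
noncomputable def PowerSeries.comp' (g f : PowerSeries ℝ) : PowerSeries ℝ :=
  PowerSeries.mk fun n => ∑ k ∈ Finset.range (n + 1), (coeff k g) * coeff n (f ^ k)

/-- The power series of `h x = exp x - 1`. -/
noncomputable def expSubOne : PowerSeries ℝ :=
  PowerSeries.mk fun n => if n = 0 then 0 else ((Nat.factorial n : ℝ))⁻¹

/-- `F` is a regular `t`-th iterate of `h x = exp x - 1`:
`F = X + t·(1/2)·X² + ⋯` and `F` commutes with `h` under composition. -/
noncomputable def IsRegIterExp (t : ℝ) (F : PowerSeries ℝ) : Prop :=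
  coeff 0 F = 0 ∧ coeff 1 F = 1 ∧ coeff 2 F = t * (1/2) ∧
  PowerSeries.comp' F expSubOne = PowerSeries.comp' expSubOne F

/-- The series `v` in the expansion `α x = -2/x + (1/3)·log (±x) + v x` of the regular Abel
function of `h x = exp x - 1` has zero radius of convergence.  Here the relation between `v`
and the iterative logarithm `j` of `h` is `j · (2 + x/3 + x²·v') = x²` (i.e. `α' = 1/j`);
Baker's theorem (`h^[t]` converges only for integer `t`), Écalle's criterion (if `j` converges
then all regular iterates converge), and the formal existence of regular iterates are taken
as hypotheses. -/
theorem abel_series_v_diverges (j v : PowerSeries ℝ)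
    (hjv : j * (PowerSeries.C (R := ℝ) 2 + PowerSeries.C (R := ℝ) (1/3) * PowerSeries.X
        + PowerSeries.X ^ 2 * PowerSeries.mk fun n : ℕ => (n + 1 : ℝ) * coeff (n + 1) v)
      = PowerSeries.X ^ 2)
    (hEcalle : HasPosRadius j → ∀ t : ℝ, ∀ F : PowerSeries ℝ,
      IsRegIterExp t F → HasPosRadius F)
    (hBaker : ∀ t : ℝ, (∃ F : PowerSeries ℝ, IsRegIterExp t F ∧ HasPosRadius F) →
      ∃ k : ℤ, t = (k : ℝ))
    (hExists : ∀ t : ℝ, ∃ F : PowerSeries ℝ, IsRegIterExp t F) :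
    ¬ HasPosRadius v := by
  rintro ⟨r, hr, hsum⟩
  set d : ℕ → ℝ := fun n => (n + 1 : ℝ) * coeff (n + 1) v with hd_def
  clear_value d
  -- geometric bound for d
  obtain ⟨ρ, hρ0, M, hM1, hd⟩ : ∃ ρ : ℝ, 0 < ρ ∧ ∃ M : ℝ, 1 ≤ M ∧
      ∀ n : ℕ, |d n| * ρ ^ n ≤ M := by
    have hC : ∀ n : ℕ, |coeff n v| * r ^ n ≤ ∑' m : ℕ, |coeff m v| * r ^ m := fun n =>
      hsum.le_tsum n (fun i _ => by positivity)
    set Cv : ℝ := ∑' m : ℕ, |coeff m v| * r ^ m with hCv_def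
    clear_value Cv
    have hCv0 : 0 ≤ Cv := le_trans (by positivity) (hC 0)
    have hCvr : 0 ≤ Cv / r := by positivity
    refine ⟨r/2, by positivity, Cv / r + 1, by linarith, fun n => ?_⟩
    have h1 : |coeff (n+1) v| ≤ Cv / r ^ (n+1) := by
      rw [le_div_iff₀ (by positivity)]
      exact hC (n+1)
    have h2 : ((n:ℝ) + 1) ≤ 2 ^ n := by
      have := Nat.succ_le_of_lt (Nat.lt_two_pow_self (n := n))
      exact_mod_cast this
    have habs : |d n| = ((n:ℝ)+1) * |coeff (n+1) v| := by
      rw [hd_def]; simp [abs_mul, abs_of_nonneg (by positivity : (0:ℝ) ≤ (n:ℝ)+1)]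
    calc |d n| * (r/2) ^ n = ((n:ℝ)+1) * |coeff (n+1) v| * (r/2) ^ n := by rw [habs]
      _ ≤ ((n:ℝ)+1) * (Cv / r ^ (n+1)) * (r/2) ^ n := by gcongr
      _ = (Cv / r) * (((n:ℝ)+1) / 2 ^ n) := by field_simp; rw [mul_assoc, ← mul_pow]; norm_num; ring
      _ ≤ (Cv / r) * 1 := by
          apply mul_le_mul_of_nonneg_left _ (by positivity)
          rw [div_le_one (by positivity)]; exact h2
      _ ≤ Cv / r + 1 := by linarith
  have hM0 : (0:ℝ) < M := lt_of_lt_of_le one_pos hM1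
  -- choose τ
  obtain ⟨τ, hτ0, hτρ, hτ1, hτM⟩ : ∃ τ : ℝ, 0 < τ ∧ τ ≤ ρ/2 ∧ τ ≤ 1 ∧ τ * (1+2*M) ≤ 1 := by
    refine ⟨min (ρ/2) (min 1 (1/(1+2*M))), lt_min (by positivity) (lt_min one_pos (by positivity)),
      min_le_left _ _, le_trans (min_le_right _ _) (min_le_left _ _), ?_⟩
    have h := le_trans (min_le_right (ρ/2) _) (min_le_right 1 (1/(1+2*M)))
    rw [le_div_iff₀ (by positivity)] at h
    linarith
  -- coefficient recursion from hjv
  have h2 : PowerSeries.C (R := ℝ) 2 * j + PowerSeries.C (R := ℝ) (1/3) * (PowerSeries.X * j)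
      + PowerSeries.X ^ 2 * (j * PowerSeries.mk d) = PowerSeries.X ^ 2 := by
    linear_combination hjv
  have hrec : ∀ n : ℕ, 2 * coeff (n+2) j =
      (if n = 0 then (1:ℝ) else 0) - (1/3) * coeff (n+1) j
      - ∑ p ∈ Finset.HasAntidiagonal.antidiagonal n, coeff p.1 j * d p.2 := by
    intro n
    have h := congrArg (coeff (n+2)) h2
    rw [map_add, map_add, coeff_C_mul, coeff_C_mul, coeff_succ_X_mul,
      coeff_X_pow_mul _ 2 n, coeff_mul, coeff_X_pow] at h
    simp only [coeff_mk] at h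
    have hn2 : (n + 2 = 2) ↔ (n = 0) := by omega
    rw [if_congr hn2 rfl rfl] at h
    linarith [h]
  have hj0 : coeff 0 j = 0 := by
    have h := congrArg (coeff 0) h2
    rw [map_add, map_add, coeff_C_mul, coeff_C_mul, coeff_X_pow_mul' _ 2 0, coeff_X_pow] at h
    · simp only [coeff_zero_eq_constantCoeff, map_mul, constantCoeff_X, mul_zero, zero_mul,
        add_zero, if_neg (by omega : ¬ 0 = 2)] at h
      rw [if_neg (by omega : ¬ (2:ℕ) ≤ 0)] at h
      rw [coeff_zero_eq_constantCoeff]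
      linarith [h]
  have hj1 : coeff 1 j = 0 := by
    have h := congrArg (coeff 1) h2
    rw [map_add, map_add, coeff_C_mul, coeff_C_mul, coeff_succ_X_mul,
      coeff_X_pow_mul' _ 2 1, coeff_X_pow] at h
    simp only [hj0, mul_zero, zero_add, if_neg (by omega : ¬ 1 = 2), if_neg (by omega : ¬ (2:ℕ) ≤ 1)] at h
    linarith [h]
  -- geometric partial sums
  have geom : ∀ m : ℕ, ∑ b ∈ Finset.range m, (1/2:ℝ)^b ≤ 2 := by
    intro m
    rw [geom_sum_eq (by norm_num) m]
    have h := pow_nonneg (by norm_num : (0:ℝ) ≤ 1/2) m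
    rw [div_le_iff_of_neg (by norm_num : (1/2:ℝ) - 1 < 0)]
    linarith
  -- main bound by strong induction
  have key : ∀ n : ℕ, |coeff n j| * τ ^ n ≤ 1 := by
    intro n
    induction n using Nat.strong_induction_on with
    | _ n ih =>
      match n with
      | 0 => simp [hj0]
      | 1 => simp [hj1]
      | (m+2) =>
        have heq := hrec m
        have e1 : |if m = 0 then (1:ℝ) else 0| ≤ 1 := by split <;> simp
        have e2 : |(1/3) * coeff (m+1) j| = (1/3) * |coeff (m+1) j| := by
          rw [abs_mul]; norm_num
        have e3 : |∑ p ∈ Finset.HasAntidiagonal.antidiagonal m, coeff p.1 j * d p.2|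
            ≤ ∑ p ∈ Finset.HasAntidiagonal.antidiagonal m, |coeff p.1 j| * |d p.2| :=
          (Finset.abs_sum_le_sum_abs _ _).trans
            (le_of_eq (Finset.sum_congr rfl fun p _ => abs_mul _ _))
        have habs : |2 * coeff (m+2) j| ≤ 1 + (1/3) * |coeff (m+1) j|
            + ∑ p ∈ Finset.HasAntidiagonal.antidiagonal m, |coeff p.1 j| * |d p.2| := by
          rw [heq]
          have t1 := abs_sub ((if m = 0 then (1:ℝ) else 0) - (1/3) * coeff (m+1) j)
            (∑ p ∈ Finset.HasAntidiagonal.antidiagonal m, coeff p.1 j * d p.2)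
          have t2 := abs_sub (if m = 0 then (1:ℝ) else 0) ((1/3) * coeff (m+1) j)
          rw [e2] at t2
          linarith
        -- bound the convolution sum times τ^m
        have hS : (∑ p ∈ Finset.HasAntidiagonal.antidiagonal m, |coeff p.1 j| * |d p.2|) * τ ^ m
            ≤ 2 * M := by
          rw [Finset.sum_mul]
          have step : ∀ p ∈ Finset.HasAntidiagonal.antidiagonal m,
              |coeff p.1 j| * |d p.2| * τ ^ m ≤ M * (1/2)^p.2 := by
            intro p hp
            rw [Finset.HasAntidiagonal.mem_antidiagonal] at hp
            have hsplit : τ ^ m = τ ^ p.1 * τ ^ p.2 := by rw [← pow_add, hp]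
            have hja : |coeff p.1 j| * τ ^ p.1 ≤ 1 := ih p.1 (by omega)
            have hdb : |d p.2| * τ ^ p.2 ≤ M * (1/2)^p.2 := by
              calc |d p.2| * τ ^ p.2 ≤ |d p.2| * (ρ/2) ^ p.2 := by gcongr
                _ = (|d p.2| * ρ ^ p.2) * (1/2)^p.2 := by rw [div_pow]; simp only [one_div, inv_pow]; ring
                _ ≤ M * (1/2)^p.2 := by gcongr; exact hd p.2
            calc |coeff p.1 j| * |d p.2| * τ ^ m
                = (|coeff p.1 j| * τ ^ p.1) * (|d p.2| * τ ^ p.2) := by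
                  rw [hsplit]; try ring
              _ ≤ 1 * (M * (1/2)^p.2) := by
                  apply mul_le_mul hja hdb (by positivity) (by norm_num)
              _ = M * (1/2)^p.2 := one_mul _
          calc (∑ p ∈ Finset.HasAntidiagonal.antidiagonal m, |coeff p.1 j| * |d p.2| * τ ^ m)
              ≤ ∑ p ∈ Finset.HasAntidiagonal.antidiagonal m, M * (1/2)^p.2 :=
                Finset.sum_le_sum step
            _ = M * ∑ p ∈ Finset.HasAntidiagonal.antidiagonal m, (1/2:ℝ)^p.2 := by
                rw [Finset.mul_sum]
            _ = M * ∑ k ∈ Finset.range (m+1), (1/2:ℝ)^(m - k) := by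
                rw [Finset.Nat.sum_antidiagonal_eq_sum_range_succ_mk]
            _ = M * ∑ k ∈ Finset.range (m+1), (1/2:ℝ)^k := by
                congr 1
                have h := Finset.sum_range_reflect (fun k => (1/2:ℝ)^k) (m+1)
                simpa using h
            _ ≤ M * 2 := mul_le_mul_of_nonneg_left (geom (m+1)) (le_of_lt hM0)
            _ = 2 * M := by ring
        -- combine
        have hτm : τ ^ (m+2) ≤ 1 := pow_le_one₀ (le_of_lt hτ0) hτ1
        have hτpos : (0:ℝ) < τ ^ (m+2) := by positivity
        have hB : (1/3) * |coeff (m+1) j| * τ ^ (m+2) ≤ (1/3) * τ := by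
          have h := ih (m+1) (by omega)
          calc (1/3) * |coeff (m+1) j| * τ ^ (m+2)
              = (1/3) * τ * (|coeff (m+1) j| * τ ^ (m+1)) := by ring
            _ ≤ (1/3) * τ * 1 := mul_le_mul_of_nonneg_left h (by positivity)
            _ = (1/3) * τ := mul_one _
        have hSτ : (∑ p ∈ Finset.HasAntidiagonal.antidiagonal m, |coeff p.1 j| * |d p.2|) * τ ^ (m+2)
            ≤ 2 * M * τ ^ 2 := by
          calc (∑ p ∈ Finset.HasAntidiagonal.antidiagonal m, |coeff p.1 j| * |d p.2|) * τ ^ (m+2)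
              = ((∑ p ∈ Finset.HasAntidiagonal.antidiagonal m, |coeff p.1 j| * |d p.2|) * τ ^ m) * τ ^ 2 := by
                ring
            _ ≤ 2 * M * τ ^ 2 := mul_le_mul_of_nonneg_right hS (by positivity)
        have e4 : 2 * (|coeff (m+2) j| * τ ^ (m+2)) = |2 * coeff (m+2) j| * τ ^ (m+2) := by
          rw [abs_mul, abs_of_nonneg (by norm_num : (0:ℝ) ≤ 2)]
          ring
        have e5 : |2 * coeff (m+2) j| * τ ^ (m+2)
            ≤ (1 + (1/3) * |coeff (m+1) j|
              + ∑ p ∈ Finset.HasAntidiagonal.antidiagonal m, |coeff p.1 j| * |d p.2|) * τ ^ (m+2) :=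
          mul_le_mul_of_nonneg_right habs (by positivity)
        have hτ2 : τ ^ 2 ≤ τ := by nlinarith
        nlinarith [e4, e5, hB, hSτ, hτm, hτM, hM0]
  -- j has positive radius
  have hjpos : HasPosRadius j := by
    refine ⟨τ/2, by positivity, ?_⟩
    apply Summable.of_nonneg_of_le (fun n => by positivity)
      (fun n => ?_) summable_geometric_two
    calc |coeff n j| * (τ/2) ^ n = (|coeff n j| * τ ^ n) * (1/2)^n := by
          rw [div_pow]; simp only [one_div, inv_pow]; ring
      _ ≤ 1 * (1/2)^n := mul_le_mul_of_nonneg_right (key n) (by positivity)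
      _ = (1/2)^n := one_mul _
  -- contradiction via Baker / Écalle at t = 1/2
  obtain ⟨F, hF⟩ := hExists (1/2)
  obtain ⟨k, hk⟩ := hBaker (1/2) ⟨F, hF, hEcalle hjpos (1/2) F hF⟩
  have h2k : (2 * k : ℤ) = 1 := by
    have : ((2 * k : ℤ) : ℝ) = 1 := by push_cast; linarith [hk]
    exact_mod_cast this
  omega
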